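/- arXiv:1703.08863 — 3 statements merged into one kernel-verified Lean document; each statement's English description precedes it below -/
import Mathlib

section
/- For all real x and real y ≠ 0, |Re cot(π(x+iy)/2)| ≤ 1/sinh(π|y|). -/
open Complex Real

theorem re_cot_eq (x y : ℝ) (hy : y ≠ 0) :
    (Complex.cot ((Real.pi / 2 : ℂ) * (x + y * Complex.I))).re
      = Real.sin (π/2*x) * Real.cos (π/2*x) /
        ((Real.sin (π/2*x))^2 + (Real.sinh (π/2*y))^2) := by
  have hz : (Real.pi / 2 : ℂ) * (x + y * Complex.I) = ((π/2*x : ℝ) : ℂ) + ((π/2*y : ℝ):ℂ) * Complex.I := by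
    push_cast; ring
  rw [hz, Complex.cot_eq_cos_div_sin, Complex.sin_eq, Complex.cos_eq, Complex.div_re]
  simp only [Complex.add_re, Complex.add_im, Complex.sub_re, Complex.sub_im, Complex.mul_re,
    Complex.mul_im, Complex.I_re, Complex.I_im, Complex.ofReal_re, Complex.ofReal_im,
    Complex.normSq_apply, Complex.cos_ofReal_re, Complex.sin_ofReal_re, Complex.sinh_ofReal_re,
    Complex.cos_ofReal_im, Complex.sin_ofReal_im, Complex.sinh_ofReal_im,
    Complex.cosh_ofReal_re, Complex.cosh_ofReal_im, mul_zero, mul_one, zero_mul, sub_zero,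
    add_zero, zero_add, neg_zero, zero_sub, mul_neg, neg_neg, neg_mul]
  rw [← add_div]
  set a := π/2*x
  set b := π/2*y
  have hc := Real.cosh_sq b
  have hs := Real.sin_sq_add_cos_sq a
  have hb : Real.sinh b ≠ 0 := by
    rw [ne_eq, Real.sinh_eq_zero]
    simp [b, Real.pi_ne_zero, hy]
  have hb2 : 0 < Real.sinh b ^ 2 := by positivity
  have hD1 : 0 < Real.sin a * Real.cosh b * (Real.sin a * Real.cosh b) +
      Real.cos a * Real.sinh b * (Real.cos a * Real.sinh b) := by
    nlinarith [sq_nonneg (Real.sin a), sq_nonneg (Real.cos a * Real.sinh b)]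
  have hD2 : 0 < Real.sin a ^ 2 + Real.sinh b ^ 2 := by positivity
  rw [div_eq_div_iff (ne_of_gt hD1) (ne_of_gt hD2)]
  linear_combination (Real.sin a * Real.cos a * Real.sinh b ^2) * hc -
    (Real.sin a * Real.cos a * Real.sinh b ^2) * hs


theorem re_cot_bound (x y : ℝ) (hy : y ≠ 0) :
    |(Complex.cot ((Real.pi / 2 : ℂ) * (x + y * Complex.I))).re|
      ≤ 1 / Real.sinh (Real.pi * |y|) := by
  rw [re_cot_eq x y hy]
  set a := π/2*x
  set s := Real.sin a
  set c := Real.cos a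
  have hsq : Real.sinh (π/2*y) ^ 2 = Real.sinh (π/2*|y|) ^ 2 := by
    rcases abs_choice y with h | h <;> rw [h] <;> simp [mul_comm, Real.sinh_neg, neg_sq, mul_neg]
  set h := Real.sinh (π/2*|y|)
  set H := Real.cosh (π/2*|y|)
  have hh : 0 < h := Real.sinh_pos_iff.2 (by positivity)
  have hH : 0 < H := Real.cosh_pos _
  have hsinh : Real.sinh (π * |y|) = 2 * h * H := by
    rw [show π * |y| = 2 * (π/2*|y|) by ring, Real.sinh_two_mul]
  rw [hsq, hsinh, abs_div, abs_of_pos (by positivity : (0:ℝ) < s^2 + h^2)]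
  rw [div_le_div_iff₀ (by positivity) (by positivity)]
  have hc2 : H ^ 2 = 1 + h ^ 2 := by
    have := Real.cosh_sq (π/2*|y|); linarith
  have hs2 : s ^ 2 + c ^ 2 = 1 := Real.sin_sq_add_cos_sq a
  have habs : |s * c| = |s| * |c| := abs_mul _ _
  have e2 : s^2*H^2 + c^2*h^2 = s^2 + h^2 := by
    linear_combination s^2 * hc2 + h^2 * hs2
  have a1' : |s|^2 * H^2 = s^2 * H^2 := by rw [_root_.sq_abs]
  have a2' : |c|^2 * h^2 = c^2 * h^2 := by rw [_root_.sq_abs]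
  rw [habs]
  nlinarith [sq_nonneg (|s| * H - |c| * h), a1', a2', e2]
end

section
/- For ε ∈ {0,1} and t ∈ ℝ, |Γ_ℝ(2+ε−it) / Γ_ℝ(1+ε+it)|² ≤ ((1+ε)² + t²)/π², where Γ_ℝ(s) = π^{-s/2}Γ(s/2). -/
open Complex Real

/-- Γ_ℝ(s) = π^{-s/2} Γ(s/2) -/
noncomputable def GammaR (s : ℂ) : ℂ := (Real.pi : ℂ) ^ (-s / 2) * Complex.Gamma (s / 2)

lemma GammaR_eq : GammaR = Complex.Gammaℝ := funext fun s => rfl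

lemma conj_pi_cpow (w : ℂ) : (starRingEnd ℂ) ((π:ℂ) ^ w) = (π:ℂ) ^ ((starRingEnd ℂ) w) := by
  have h : ((π:ℝ):ℂ).arg ≠ Real.pi := by
    rw [Complex.arg_ofReal_of_nonneg Real.pi_pos.le]
    exact fun h => Real.pi_ne_zero h.symm
  have := Complex.conj_cpow (π:ℂ) ((starRingEnd ℂ) w) h
  simp only [Complex.conj_ofReal, Complex.conj_conj] at this
  exact this.symm

lemma GammaR_conj (s : ℂ) : Complex.Gammaℝ ((starRingEnd ℂ) s) = (starRingEnd ℂ) (Complex.Gammaℝ s) := by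
  rw [Complex.Gammaℝ_def, Complex.Gammaℝ_def, map_mul, conj_pi_cpow, ← Complex.Gamma_conj]
  have h1 : (starRingEnd ℂ) (-s/2) = -((starRingEnd ℂ) s)/2 := by
    simp [map_div₀, Complex.conj_ofNat]
  have h2 : (starRingEnd ℂ) (s/2) = ((starRingEnd ℂ) s)/2 := by
    simp [map_div₀, Complex.conj_ofNat]
  rw [h1, h2]

lemma sq_abs_eq {w : ℂ} {r : ℝ} (h : w * (starRingEnd ℂ) w = (r:ℂ)) : ‖w‖^2 = r := by
  rw [Complex.sq_norm]
  exact_mod_cast (Complex.mul_conj w).symm.trans h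

lemma absSq1 (t : ℝ) :
    ‖Complex.Gammaℝ (1 + t * Complex.I)‖^2 = 1 / Real.cosh (π * t / 2) := by
  apply sq_abs_eq
  have hc : (starRingEnd ℂ) (1 + (t:ℂ)*I) = 1 - t*I := by
    simp [Complex.ext_iff]
  rw [← GammaR_conj, hc, mul_comm]
  have h := Complex.Gammaℝ_one_sub_mul_Gammaℝ_one_add ((t:ℂ)*I)
  rw [h]
  have h2 : (π:ℂ) * ((t:ℂ)*I)/2 = ((π*t/2 : ℝ):ℂ) * I := by push_cast; ring
  rw [h2, Complex.cos_mul_I, ← Complex.ofReal_cosh]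
  norm_num

lemma prod2 (t : ℝ) (ht : t ≠ 0) :
    Complex.Gammaℝ (2 + t*Complex.I) * Complex.Gammaℝ (2 - t*Complex.I)
      = ((t / (2*π*Real.sinh (π*t/2)) : ℝ) : ℂ) := by
  have hs : Real.sinh (π*t/2) ≠ 0 := by
    simp [Real.sinh_eq_zero, Real.pi_ne_zero, ht]
  set z : ℂ := (t:ℂ)*I/2 with hz_def
  have hz : z ≠ 0 := by
    simp [hz_def, ht, Complex.I_ne_zero]
  rw [Complex.Gammaℝ_def, Complex.Gammaℝ_def]
  rw [show ((2:ℂ)+(t:ℂ)*I)/2 = z+1 by rw [hz_def]; ring]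
  rw [show ((2:ℂ)-(t:ℂ)*I)/2 = 1-z by rw [hz_def]; ring]
  rw [show (Real.pi:ℂ) ^ (-(2 + (t:ℂ)*I) / 2) * Complex.Gamma (z+1) *
      ((Real.pi:ℂ) ^ (-(2 - (t:ℂ)*I) / 2) * Complex.Gamma (1-z))
      = ((Real.pi:ℂ) ^ (-(2 + (t:ℂ)*I) / 2) * (Real.pi:ℂ) ^ (-(2 - (t:ℂ)*I) / 2)) *
        (Complex.Gamma (z+1) * Complex.Gamma (1-z)) by ring,
    ← Complex.cpow_add _ _ (Complex.ofReal_ne_zero.mpr Real.pi_ne_zero)]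
  rw [show -(2 + (t:ℂ)*I) / 2 + -(2 - (t:ℂ)*I) / 2 = ((-2 : ℤ) : ℂ) by push_cast; ring,
    Complex.cpow_intCast]
  have hsin : Complex.sin ((π:ℂ) * z) = ((Real.sinh (π*t/2) : ℝ):ℂ) * I := by
    rw [show (π:ℂ) * z = ((π*t/2 : ℝ):ℂ) * I by rw [hz_def]; push_cast; ring,
      Complex.sin_mul_I, Complex.ofReal_sinh]
  have hG : Complex.Gamma (z+1) * Complex.Gamma (1-z)
      = z * (((Real.sinh (π*t/2) : ℝ):ℂ) * I)⁻¹ * π := by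
    rw [Complex.Gamma_add_one z hz, mul_assoc, Complex.Gamma_mul_Gamma_one_sub z, hsin]
    field_simp
  rw [hG, hz_def, Complex.ofReal_div, Complex.ofReal_mul, Complex.ofReal_mul,
    Complex.ofReal_ofNat]
  rw [show ((π:ℝ):ℂ)^(-2:ℤ) = (((π:ℝ):ℂ)^2)⁻¹ by rw [zpow_neg]; norm_cast]
  have hπC : ((π:ℝ):ℂ) ≠ 0 := Complex.ofReal_ne_zero.mpr Real.pi_ne_zero
  have hsC : ((Real.sinh (π*t/2) : ℝ):ℂ) ≠ 0 := Complex.ofReal_ne_zero.mpr hs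
  have hIC : (Complex.I) ≠ 0 := Complex.I_ne_zero
  field_simp

lemma absSq2 (t : ℝ) (ht : t ≠ 0) :
    ‖Complex.Gammaℝ (2 + t * Complex.I)‖^2 = t / (2*π*Real.sinh (π*t/2)) := by
  apply sq_abs_eq
  have hc : (starRingEnd ℂ) (2 + (t:ℂ)*I) = 2 - t*I := by
    simp [Complex.ext_iff]
  rw [← GammaR_conj, hc]
  exact prod2 t ht

lemma absSq3 (t : ℝ) :
    ‖Complex.Gammaℝ (3 + t * Complex.I)‖^2
      = (1 + t^2) / (4*π^2*Real.cosh (π*t/2)) := by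
  have hne : (1 : ℂ) + t*I ≠ 0 := by
    intro h
    have := congrArg Complex.re h
    simp at this
  have h : Complex.Gammaℝ (3 + t*I) = Complex.Gammaℝ (1 + t*I) * (1 + t*I) / 2 / π := by
    rw [show (3 + (t:ℂ)*I : ℂ) = (1 + (t:ℂ)*I) + 2 by ring, Complex.Gammaℝ_add_two hne]
  rw [h, norm_div, norm_div, norm_mul, div_pow, div_pow, mul_pow, absSq1 t]
  have h1 : ‖(1 + (t:ℂ)*I)‖^2 = 1 + t^2 := by
    rw [Complex.sq_norm, Complex.normSq_apply]
    simp
    ring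
  have h2 : ‖(2:ℂ)‖ = 2 := by norm_num
  have h3 : ‖((π:ℝ):ℂ)‖ = π := by
    rw [Complex.norm_real, Real.norm_eq_abs, abs_of_pos Real.pi_pos]
  rw [h1, h2, h3]
  have hc : Real.cosh (π*t/2) > 0 := Real.cosh_pos _
  have hπ : π > 0 := Real.pi_pos
  rw [div_eq_div_iff (by positivity) (by positivity)]
  field_simp
  ring


lemma mono_aux {f f' : ℝ → ℝ} (hf : ∀ y, HasDerivAt f (f' y) y)
    (h0 : ∀ y, 0 ≤ y → 0 ≤ f' y) {x : ℝ} (hx : 0 ≤ x) : f 0 ≤ f x := by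
  have hm : MonotoneOn f (Set.Ici 0) := by
    apply monotoneOn_of_deriv_nonneg (convex_Ici 0)
    · exact fun y _ => (hf y).continuousAt.continuousWithinAt
    · intro y hy
      exact ((hf y).differentiableAt).differentiableWithinAt
    · intro y hy
      rw [interior_Ici] at hy
      rw [(hf y).deriv]
      exact h0 y hy.le
  exact hm (Set.self_mem_Ici) hx hx

lemma sinh_nonneg_aux {y : ℝ} (hy : 0 ≤ y) : 0 ≤ Real.sinh y := by
  simpa using Real.sinh_le_sinh.mpr hy

lemma H2 {x : ℝ} (hx : 0 ≤ x) : Real.sinh x ≤ x * Real.cosh x := by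
  have h := mono_aux (f := fun y => y * Real.cosh y - Real.sinh y)
    (f' := fun y => y * Real.sinh y)
    (fun y => by
      have := ((hasDerivAt_id y).mul (Real.hasDerivAt_cosh y)).sub (Real.hasDerivAt_sinh y)
      exact this.congr_deriv (by simp))
    (fun y hy => mul_nonneg hy (sinh_nonneg_aux hy)) hx
  simp at h
  linarith

lemma H1' {x : ℝ} (hx : 0 ≤ x) : 3 * x * Real.cosh x ≤ (3 + x ^ 2) * Real.sinh x := by
  have h := mono_aux (f := fun y => (3 + y ^ 2) * Real.sinh y - 3 * y * Real.cosh y)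
    (f' := fun y => y ^ 2 * Real.cosh y - y * Real.sinh y)
    (fun y => by
      have h1 : HasDerivAt (fun y : ℝ => 3 + y ^ 2) (2 * y) y := by
        simpa using (hasDerivAt_pow 2 y).const_add 3
      have h2 : HasDerivAt (fun y : ℝ => 3 * y) 3 y := by
        simpa using (hasDerivAt_id y).const_mul 3
      have := (h1.mul (Real.hasDerivAt_sinh y)).sub (h2.mul (Real.hasDerivAt_cosh y))
      exact this.congr_deriv (by ring))
    (fun y hy => by
      show 0 ≤ y ^ 2 * Real.cosh y - y * Real.sinh y
      nlinarith [H2 hy, Real.cosh_pos (x := y), sinh_nonneg_aux hy])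
    hx
  simp at h
  linarith

lemma H3 (x : ℝ) : Real.sinh x ≤ Real.cosh x := by
  rw [Real.sinh_eq, Real.cosh_eq]
  nlinarith [Real.exp_pos (-x)]

lemma pi_sq_le_12 : π^2 ≤ 12 := by
  nlinarith [Real.pi_lt_d2, Real.pi_pos]

lemma pi_sq_le_10 : π^2 ≤ 10 := by
  nlinarith [Real.pi_lt_d2, Real.pi_pos]

theorem gammaR_ratio_bound (ε : ℝ) (hε : ε = 0 ∨ ε = 1) (t : ℝ) :
    ‖GammaR (2 + ε - t * Complex.I) / GammaR (1 + ε + t * Complex.I)‖ ^ 2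
      ≤ ((1 + ε) ^ 2 + t ^ 2) / Real.pi ^ 2 := by
  rw [GammaR_eq]
  suffices key : ∀ u : ℝ, 0 ≤ u →
      ‖Complex.Gammaℝ (2 + ε - u * Complex.I) /
        Complex.Gammaℝ (1 + ε + u * Complex.I)‖^2 ≤ ((1+ε)^2 + u^2)/π^2 by
    rcases le_or_gt 0 t with h | h
    · exact key t h
    · have h1 := key (-t) (by linarith)
      have e : Complex.Gammaℝ (2 + ε - ((-t:ℝ):ℂ) * I) / Complex.Gammaℝ (1 + ε + ((-t:ℝ):ℂ) * I)
          = (starRingEnd ℂ) (Complex.Gammaℝ (2 + ε - t * I) / Complex.Gammaℝ (1 + ε + t * I)) := by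
        rw [map_div₀, ← GammaR_conj, ← GammaR_conj]
        congr 2 <;> simp [Complex.ext_iff]
      rw [e, Complex.norm_conj] at h1
      simpa using h1
  intro u hu
  rcases eq_or_lt_of_le hu with rfl | hu
  · -- u = 0
    rcases hε with rfl | rfl
    · have e1 : (2 + ((0:ℝ):ℂ) - ((0:ℝ):ℂ) * I) = 2 := by norm_num
      have e2 : (1 + ((0:ℝ):ℂ) + ((0:ℝ):ℂ) * I) = 1 := by norm_num
      rw [e1, e2, Complex.Gammaℝ_one]
      have h2 : Complex.Gammaℝ 2 = ((π:ℝ):ℂ)⁻¹ := by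
        rw [Complex.Gammaℝ_def, show (-(2:ℂ))/2 = -1 by norm_num,
          show ((2:ℂ))/2 = 1 by norm_num, Complex.cpow_neg_one, Complex.Gamma_one, mul_one]
      rw [h2]
      rw [div_one, norm_inv, Complex.norm_real, Real.norm_eq_abs, abs_of_pos Real.pi_pos]
      norm_num
    · -- u = 0, ε = 1
      have e1 : (2 + ((1:ℝ):ℂ) - ((0:ℝ):ℂ) * I) = 3 := by norm_num
      have e2 : (1 + ((1:ℝ):ℂ) + ((0:ℝ):ℂ) * I) = 2 := by norm_num
      rw [e1, e2]
      have h2 : Complex.Gammaℝ 2 = ((π:ℝ):ℂ)⁻¹ := by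
        rw [Complex.Gammaℝ_def, show (-(2:ℂ))/2 = -1 by norm_num,
          show ((2:ℂ))/2 = 1 by norm_num, Complex.cpow_neg_one, Complex.Gamma_one, mul_one]
      have h3 : Complex.Gammaℝ 3 = 1/(2*((π:ℝ):ℂ)) := by
        rw [show (3:ℂ) = 1 + 2 by norm_num, Complex.Gammaℝ_add_two one_ne_zero,
          Complex.Gammaℝ_one]
        ring
      have hπC : ((π:ℝ):ℂ) ≠ 0 := Complex.ofReal_ne_zero.mpr Real.pi_ne_zero
      have h4 : Complex.Gammaℝ 3 / Complex.Gammaℝ 2 = (2:ℂ)⁻¹ := by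
        rw [h2, h3]
        field_simp
      rw [h4, norm_inv]
      have : ‖(2:ℂ)‖ = 2 := by norm_num
      rw [this]
      have hπ4 : π ≤ 4 := Real.pi_le_four
      rw [show ((2:ℝ))⁻¹^2 = 1/4 by norm_num, div_le_div_iff₀ (by positivity) (by positivity)]
      nlinarith [Real.pi_pos]
  · -- u > 0
    have hs : 0 < Real.sinh (π*u/2) := by
      apply Real.sinh_pos_iff.mpr
      positivity
    have hc : 0 < Real.cosh (π*u/2) := Real.cosh_pos _
    rcases hε with rfl | rfl
    · -- ε = 0
      have e1 : (2 + ((0:ℝ):ℂ) - (u:ℂ) * I) = 2 + ((-u : ℝ):ℂ)*I := by push_cast; ring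
      have e2 : (1 + ((0:ℝ):ℂ) + (u:ℂ) * I) = 1 + ((u : ℝ):ℂ)*I := by norm_num
      rw [e1, e2, norm_div, div_pow, absSq2 (-u) (by linarith), absSq1 u]
      rw [show π * -u/2 = -(π*u/2) by ring, Real.sinh_neg]
      have hval0 : -u / (2*π*(-Real.sinh (π*u/2))) / (1/Real.cosh (π*u/2))
          = u * Real.cosh (π*u/2) / (2*π*Real.sinh (π*u/2)) := by
        field_simp
      rw [hval0, div_le_div_iff₀ (by positivity) (by positivity)]
      -- u * cosh * π^2 ≤ ((1+0)^2 + u^2) * (2 π sinh)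
      have h1 := H1' (x := π*u/2) (by positivity)
      have hA : (2*π/3) * (3*(π*u/2)*Real.cosh (π*u/2))
          ≤ (2*π/3) * ((3+(π*u/2)^2) * Real.sinh (π*u/2)) :=
        mul_le_mul_of_nonneg_left h1 (by positivity)
      have hB : 0 ≤ (12 - π^2) * (u^2 * Real.sinh (π*u/2)) * π :=
        mul_nonneg (mul_nonneg (by nlinarith [pi_sq_le_12]) (by positivity)) Real.pi_pos.le
      nlinarith [hA, hB]
    · -- ε = 1
      have e1 : (2 + ((1:ℝ):ℂ) - (u:ℂ) * I) = 3 + ((-u : ℝ):ℂ)*I := by push_cast; ring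
      have e2 : (1 + ((1:ℝ):ℂ) + (u:ℂ) * I) = 2 + ((u : ℝ):ℂ)*I := by norm_num
      rw [e1, e2, norm_div, div_pow, absSq3 (-u), absSq2 u (by linarith)]
      rw [show π * -u/2 = -(π*u/2) by ring, Real.cosh_neg, neg_sq]
      have hval : (1+u^2)/(4*π^2*Real.cosh (π*u/2)) / (u/(2*π*Real.sinh (π*u/2)))
          = ((1+u^2)*Real.sinh (π*u/2))/(2*π*u*Real.cosh (π*u/2)) := by
        field_simp
        ring
      rw [hval, div_le_div_iff₀ (by positivity) (by positivity)]
      -- (1+u^2) * sinh * π^2 ≤ ((1+1)^2 + u^2) * (2 π u cosh)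
      rcases le_total u 1 with hu1 | hu1
      · have h2 := H2 (x := π*u/2) (by positivity)
        have hA : (π^2*(1+u^2)) * Real.sinh (π*u/2)
            ≤ (π^2*(1+u^2)) * ((π*u/2) * Real.cosh (π*u/2)) :=
          mul_le_mul_of_nonneg_left h2 (by positivity)
        have hquad : π^2*(1+u^2) ≤ 16 + 4*u^2 := by nlinarith [pi_sq_le_10, sq_nonneg u]
        have hquad2 : π^3*(1+u^2) ≤ (16 + 4*u^2)*π := by nlinarith [hquad, Real.pi_pos]
        have hB := mul_le_mul_of_nonneg_right hquad2
          (by positivity : (0:ℝ) ≤ u*Real.cosh (π*u/2)/2)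
        nlinarith [hA, hB]
      · have h3 := H3 (π*u/2)
        have hA : (π^2*(1+u^2)) * Real.sinh (π*u/2)
            ≤ (π^2*(1+u^2)) * Real.cosh (π*u/2) :=
          mul_le_mul_of_nonneg_left h3 (by positivity)
        have hπ : π < 3.15 := Real.pi_lt_d2
        have hcube : π*(1+u^2) ≤ 2*u*(4+u^2) := by
          nlinarith [sq_nonneg (u-1), hu1, Real.pi_pos]
        nlinarith [hA, hcube, mul_pos Real.pi_pos hc, hc, hu,
          mul_nonneg (mul_nonneg Real.pi_pos.le Real.pi_pos.le) hc.le]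
end

section
/- Let c > 0, B > 0, D ≥ 0, A > 0, and m an integer with |m/A| ≤ B/2. If g : ℝ → ℂ satisfies |g(t)| ≤ E(|t| + D) e^{−c|t|} for all t, then |Σ_{k≠0} g(m/A + kB)| ≤ (E/sinh(cB/2)) · (B/2 + D + B/(1 − e^{−cB})). -/
open Real

private lemma periodized_aux_alg (B D E v : ℝ) (hv0 : 0 < v) (hv1 : v < 1) :
    2 * ((E * v⁻¹ * B * (v^2 / (1 - v^2)^2) + E * v⁻¹ * (B/2+D) * (1 - v^2)⁻¹) - E * v⁻¹ * (B/2+D))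
      = E / ((v⁻¹ - v)/2) * (B/2 + D + B / (1 - v^2)) := by
  have hvne : v ≠ 0 := ne_of_gt hv0
  have hv2 : (1:ℝ) - v^2 ≠ 0 := by nlinarith
  rw [show v⁻¹ - v = (1 - v^2)/v by field_simp]
  field_simp
  ring

set_option maxHeartbeats 1000000 in
theorem periodized_tail_bound_linear (c B D A E : ℝ) (m : ℤ) (g : ℝ → ℂ)
    (hc : 0 < c) (hB : 0 < B) (hD : 0 ≤ D) (hA : 0 < A)
    (hm : |(m : ℝ) / A| ≤ B / 2)
    (hg : ∀ t : ℝ, ‖g t‖ ≤ E * (|t| + D) * Real.exp (-c * |t|)) :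
    ‖∑' k : {k : ℤ // k ≠ 0}, g ((m : ℝ) / A + (k : ℤ) * B)‖
      ≤ E / Real.sinh (c * B / 2) * (B / 2 + D + B / (1 - Real.exp (-c * B))) := by
  set x : ℝ := (m : ℝ) / A with hxdef
  set v : ℝ := Real.exp (-(c * B / 2)) with hvdef
  have hv0 : 0 < v := Real.exp_pos _
  have hv1 : v < 1 := by
    rw [hvdef]
    calc Real.exp (-(c * B / 2)) < Real.exp 0 := by
          apply Real.exp_lt_exp.mpr; nlinarith
      _ = 1 := Real.exp_zero
  have hvinv : v⁻¹ = Real.exp (c * B / 2) := by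
    rw [hvdef, Real.exp_neg, inv_inv]
  set q : ℝ := Real.exp (-c * B) with hqdef
  have hq : q = v ^ 2 := by
    rw [hqdef, hvdef, sq, ← Real.exp_add]; congr 1; ring
  have hq0 : 0 < q := Real.exp_pos _
  have hq1 : q < 1 := by rw [hq]; nlinarith
  have hE : 0 ≤ E := by
    have h := hg 1
    have h2 : (0:ℝ) ≤ E * (|(1:ℝ)| + D) * Real.exp (-c * |(1:ℝ)|) :=
      le_trans (norm_nonneg _) h
    rw [abs_one] at h2
    have h3 : 0 < Real.exp (-c * (1:ℝ)) := Real.exp_pos _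
    nlinarith [mul_pos h3 (show (0:ℝ) < 1 + D by linarith)]
  set C : ℝ := B / 2 + D with hCdef
  set Fn : ℕ → ℝ := fun n => E * v⁻¹ * ((n : ℝ) * B + C) * q ^ n with hFndef
  set T2 : ℝ := E * v⁻¹ * B * (q / (1 - q) ^ 2) + E * v⁻¹ * C * (1 - q)⁻¹ with hT2def
  have hFn : HasSum Fn T2 := by
    have h1 : HasSum (fun n : ℕ => (n : ℝ) * q ^ n) (q / (1 - q) ^ 2) :=
      hasSum_coe_mul_geometric_of_norm_lt_one
        (by rwa [Real.norm_eq_abs, abs_of_pos hq0])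
    have h2 : HasSum (fun n : ℕ => q ^ n) (1 - q)⁻¹ :=
      hasSum_geometric_of_lt_one hq0.le hq1
    have := (h1.mul_left (E * v⁻¹ * B)).add (h2.mul_left (E * v⁻¹ * C))
    have hfe : Fn = fun b : ℕ => E * v⁻¹ * B * ((b : ℝ) * q ^ b) + E * v⁻¹ * C * q ^ b := by
      funext n; simp only [hFndef]; ring
    rw [hfe]; exact this
  -- pointwise bound
  have hbound : ∀ k : {k : ℤ // k ≠ 0},
      ‖g (x + ((k : ℤ) : ℝ) * B)‖ ≤ Fn (k : ℤ).natAbs := by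
    rintro ⟨k, hk⟩
    set n : ℕ := k.natAbs with hndef
    have hn1 : (1 : ℝ) ≤ (n : ℝ) := by
      have : 1 ≤ n := by omega
      exact_mod_cast this
    have habs : |(k : ℝ)| = (n : ℝ) := by
      rw [hndef, ← Int.cast_abs, Int.abs_eq_natAbs, Int.cast_natCast]
    set t : ℝ := x + (k : ℝ) * B with htdef
    have hup : |t| ≤ (n : ℝ) * B + B / 2 := by
      calc |t| ≤ |x| + |(k : ℝ) * B| := abs_add_le _ _
        _ ≤ B / 2 + (n : ℝ) * B := by
            rw [abs_mul, habs, abs_of_pos hB]; linarith [hm]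
        _ = (n : ℝ) * B + B / 2 := by ring
    have hlo : (n : ℝ) * B - B / 2 ≤ |t| := by
      have h1 : |(k : ℝ) * B| ≤ |t| + |x| := by
        have : (k : ℝ) * B = t - x := by rw [htdef]; ring
        rw [this]
        exact abs_sub _ _
      rw [abs_mul, habs, abs_of_pos hB] at h1
      have : |x| ≤ B / 2 := hm
      linarith
    have hexp : Real.exp (-c * |t|) ≤ v⁻¹ * q ^ n := by
      have heq : v⁻¹ * q ^ n = Real.exp (c * B / 2 + (n : ℕ) * (-c * B)) := by
        rw [Real.exp_add, Real.exp_nat_mul, ← hqdef, hvinv]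
      rw [heq]
      apply Real.exp_le_exp.mpr
      nlinarith
    calc ‖g t‖ ≤ E * (|t| + D) * Real.exp (-c * |t|) := hg t
      _ ≤ E * (((n : ℝ) * B + B / 2) + D) * (v⁻¹ * q ^ n) := by
          apply mul_le_mul
          · apply mul_le_mul_of_nonneg_left _ hE; linarith
          · exact hexp
          · exact (Real.exp_pos _).le
          · have : (0 : ℝ) ≤ ((n : ℝ) * B + B / 2) + D := by nlinarith
            exact mul_nonneg hE this
      _ = Fn n := by simp only [hFndef, hCdef]; ring
  -- sum of the bound over the subtype
  set F₀ : ℤ → ℝ := fun k => if k = 0 then 0 else Fn k.natAbs with hF₀def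
  have hpos : HasSum (fun n : ℕ => F₀ (n : ℤ)) (T2 - Fn 0) := by
    have h := hFn.update 0 0
    have heq : (fun n : ℕ => F₀ (n : ℤ)) = Function.update Fn 0 0 := by
      funext n
      simp only [hF₀def, Function.update_apply]
      by_cases h : n = 0
      · simp [h]
      · have h' : (n : ℤ) ≠ 0 := by exact_mod_cast h
        simp [h, h', Int.natAbs_natCast]
    rw [heq]
    have e : T2 - Fn 0 = 0 - Fn 0 + T2 := by ring
    rw [e]; exact h
  have hneg : HasSum (fun n : ℕ => F₀ (-((n : ℤ) + 1))) (T2 - Fn 0) := by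
    have h : HasSum (fun n : ℕ => Fn (n + 1)) (T2 - Fn 0) := by
      apply (hasSum_nat_add_iff 1).mpr
      simpa using hFn
    have heq : (fun n : ℕ => F₀ (-((n : ℤ) + 1))) = fun n : ℕ => Fn (n + 1) := by
      funext n
      have h1 : (-((n : ℤ) + 1)) ≠ 0 := by omega
      have h2 : (-((n : ℤ) + 1)).natAbs = n + 1 := by omega
      simp only [hF₀def]
      rw [if_neg h1, h2]
    rw [heq]; exact h
  have hF0 : HasSum F₀ (2 * (T2 - Fn 0)) := by
    have := hpos.of_nat_of_neg_add_one hneg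
    convert this using 1; ring
  have hsub : HasSum (fun k : {k : ℤ // k ≠ 0} => Fn (k : ℤ).natAbs)
      (2 * (T2 - Fn 0)) := by
    have : HasSum ((fun k : ℤ => Fn k.natAbs) ∘ ((↑) : {k : ℤ | k ≠ 0} → ℤ))
        (2 * (T2 - Fn 0)) := by
      rw [hasSum_subtype_iff_indicator]
      convert hF0 using 1
      funext k
      by_cases h : k = 0 <;> simp [Set.indicator_apply, hF₀def, h]
    exact this
  have hgsum : Summable (fun k : {k : ℤ // k ≠ 0} => ‖g (x + ((k : ℤ) : ℝ) * B)‖) :=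
    Summable.of_nonneg_of_le (fun _ => norm_nonneg _) hbound hsub.summable
  have key : ‖∑' k : {k : ℤ // k ≠ 0}, g (x + ((k : ℤ) : ℝ) * B)‖ ≤ 2 * (T2 - Fn 0) := by
    calc ‖∑' k : {k : ℤ // k ≠ 0}, g (x + ((k : ℤ) : ℝ) * B)‖
        ≤ ∑' k : {k : ℤ // k ≠ 0}, ‖g (x + ((k : ℤ) : ℝ) * B)‖ :=
          norm_tsum_le_tsum_norm hgsum
      _ ≤ ∑' k : {k : ℤ // k ≠ 0}, Fn (k : ℤ).natAbs :=
          Summable.tsum_le_tsum hbound hgsum hsub.summable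
      _ = 2 * (T2 - Fn 0) := hsub.tsum_eq
  refine key.trans (le_of_eq ?_)
  have hsinh : Real.sinh (c * B / 2) = (v⁻¹ - v) / 2 := by
    rw [Real.sinh_eq, hvinv, ← hvdef]
  have hFn0 : Fn 0 = E * v⁻¹ * C := by simp [hFndef]
  rw [hT2def, hFn0, hsinh, hq, hCdef]
  exact periodized_aux_alg B D E v hv0 hv1
end
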